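/- Let {E^j}_{j=1}^{M₁} be a δ-packing of the Grassmann manifold Gr(p,r) under the metric ρ₂(E,F) = (1/√2)‖P_E − P_F‖_F (with P_E the orthogonal projection onto E), and let {Q^k}_{k=1}^{M₂} be a δ-packing of the orthogonal group O(r) under the Frobenius norm. Choose U^j ∈ St(p,r) with span(U^j) = E^j. Then the set {U^j Q^k : j ∈ [M₁], k ∈ [M₂]} is a δ-packing of the Stiefel manifold St(p,r) under the Frobenius norm; in particular M(δ; St(p,r), ‖·‖_F) ≥ M(δ; Gr(p,r), ρ₂) · M(δ; O(r), ‖·‖_F). -/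

import Mathlib

open Matrix

/-- Frobenius norm of a real matrix. -/
noncomputable def frob {m n : Type*} [Fintype m] [Fintype n] (A : Matrix m n ℝ) : ℝ :=
  Real.sqrt (∑ i, ∑ j, (A i j) ^ 2)


private def frobSq {m n : Type*} [Fintype m] [Fintype n] (A : Matrix m n ℝ) : ℝ :=
  ∑ i, ∑ j, (A i j) ^ 2

lemma frob_eq {m n : Type*} [Fintype m] [Fintype n] (A : Matrix m n ℝ) :
    frob A = Real.sqrt (frobSq A) := rfl

lemma frobSq_nonneg {m n : Type*} [Fintype m] [Fintype n] (A : Matrix m n ℝ) :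
    0 ≤ frobSq A :=
  Finset.sum_nonneg fun _ _ => Finset.sum_nonneg fun _ _ => sq_nonneg _

lemma frobSq_eq_trace {m n : Type*} [Fintype m] [Fintype n] (A : Matrix m n ℝ) :
    frobSq A = trace (Aᵀ * A) := by
  simp only [frobSq, trace, Matrix.diag, mul_apply, transpose_apply, sq]
  exact Finset.sum_comm

def ip {m n : Type*} [Fintype m] [Fintype n] (A B : Matrix m n ℝ) : ℝ :=
  ∑ i, ∑ j, A i j * B i j

lemma ip_eq_trace {m n : Type*} [Fintype m] [Fintype n] (A B : Matrix m n ℝ) :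
    ip A B = trace (A * Bᵀ) := by
  simp only [ip, trace, Matrix.diag, mul_apply, transpose_apply]

lemma frobSq_sub {m n : Type*} [Fintype m] [Fintype n] (A B : Matrix m n ℝ) :
    frobSq (A - B) = frobSq A - 2 * ip A B + frobSq B := by
  simp only [frobSq, ip, Matrix.sub_apply, Finset.mul_sum]
  rw [← Finset.sum_sub_distrib, ← Finset.sum_add_distrib]
  refine Finset.sum_congr rfl fun i _ => ?_
  rw [← Finset.sum_sub_distrib, ← Finset.sum_add_distrib]
  exact Finset.sum_congr rfl fun j _ => by ring

lemma ip_eq_trace' {m n : Type*} [Fintype m] [Fintype n] (A B : Matrix m n ℝ) :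
    ip A B = trace (Aᵀ * B) := by
  simp only [ip, trace, Matrix.diag, mul_apply, transpose_apply]
  exact Finset.sum_comm

lemma mid_cancel {a b q s : Type*} [Fintype a] [Fintype b] [Fintype q] [Fintype s]
    [DecidableEq b]
    (U : Matrix a b ℝ) (hU : Uᵀ * U = 1)
    (X : Matrix q b ℝ) (Y : Matrix b s ℝ) :
    X * Uᵀ * (U * Y) = X * Y := by
  rw [Matrix.mul_assoc, ← Matrix.mul_assoc Uᵀ, hU, Matrix.one_mul]

lemma key_ineq {p r : ℕ} (U V : Matrix (Fin p) (Fin r) ℝ)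
    (A B : Matrix (Fin r) (Fin r) ℝ)
    (hU : Uᵀ * U = 1) (hV : Vᵀ * V = 1) (hA : Aᵀ * A = 1) (hB : Bᵀ * B = 1) :
    frobSq (U * Uᵀ - V * Vᵀ) / 2 ≤ frobSq (U * A - V * B) := by
  set t : ℝ := trace (1 : Matrix (Fin r) (Fin r) ℝ) with ht
  have hUA : frobSq (U * A) = t := by
    rw [frobSq_eq_trace, transpose_mul, mid_cancel U hU, hA]
  have hVB : frobSq (V * B) = t := by
    rw [frobSq_eq_trace, transpose_mul, mid_cancel V hV, hB]
  have hUU : frobSq (U * Uᵀ) = t := by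
    rw [frobSq_eq_trace, transpose_mul, transpose_transpose, mid_cancel U hU,
      Matrix.trace_mul_comm, hU]
  have hVV : frobSq (V * Vᵀ) = t := by
    rw [frobSq_eq_trace, transpose_mul, transpose_transpose, mid_cancel V hV,
      Matrix.trace_mul_comm, hV]
  have hAB : frobSq (A * Bᵀ) = t := by
    rw [frobSq_eq_trace, transpose_mul, transpose_transpose, mid_cancel A hA,
      Matrix.trace_mul_comm, hB]
  have hipUV : ip (U * Uᵀ) (V * Vᵀ) = frobSq (Uᵀ * V) := by
    rw [ip_eq_trace', frobSq_eq_trace, transpose_mul, transpose_mul, transpose_transpose]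
    -- ⊢ trace (U * Uᵀ * (V * Vᵀ)) = trace (Vᵀ * U * (Uᵀ * V))
    rw [show U * Uᵀ * (V * Vᵀ) = (U * (Uᵀ * V)) * Vᵀ from by simp [Matrix.mul_assoc],
      Matrix.trace_mul_comm, Matrix.mul_assoc]
  have hip : ip (U * A) (V * B) = ip (Uᵀ * V) (A * Bᵀ) := by
    rw [ip_eq_trace', ip_eq_trace', transpose_mul, transpose_mul, transpose_transpose]
    -- ⊢ trace (Aᵀ * Uᵀ * (V * B)) = trace (Vᵀ * U * (A * Bᵀ))
    rw [← Matrix.trace_transpose (Vᵀ * U * (A * Bᵀ))]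
    simp only [transpose_mul, transpose_transpose]
    -- RHS now : trace ((A*Bᵀ)ᵀ stuff) = trace (B * Aᵀ * (Uᵀ * V)) maybe
    rw [show Aᵀ * Uᵀ * (V * B) = (Aᵀ * Uᵀ * V) * B from by simp [Matrix.mul_assoc],
      Matrix.trace_mul_comm]
    congr 1
    simp [Matrix.mul_assoc]
  have hW := frobSq_nonneg (Uᵀ * V - A * Bᵀ)
  rw [frobSq_sub] at hW
  rw [frobSq_sub, frobSq_sub, hUA, hVB, hUU, hVV, hip, hipUV]
  rw [hAB] at hW
  linarith

/-- If `{span(U^j)}` is a `δ`-packing of the Grassmannian `Gr(p,r)` for the metric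
`ρ₂(E,F) = (1/√2)‖P_E − P_F‖_F` (with `P_E = U U ᵀ` for orthonormal `U`), and `{Q^k}`
is a `δ`-packing of `O(r)` in the Frobenius norm, then `{U^j Q^k}` is a `δ`-packing of
the Stiefel manifold `St(p,r)` in the Frobenius norm. In particular, the packing
number of `St(p,r)` is at least the product of those of `Gr(p,r)` and `O(r)`. -/
theorem stiefel_packing_of_grassmann_and_orthogonal
    {p r M₁ M₂ : ℕ} (δ : ℝ)
    (U : Fin M₁ → Matrix (Fin p) (Fin r) ℝ)
    (hU : ∀ j, (U j)ᵀ * U j = 1)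
    (hUpack : ∀ j j', j ≠ j' →
      δ < (1 / Real.sqrt 2) * frob (U j * (U j)ᵀ - U j' * (U j')ᵀ))
    (Q : Fin M₂ → Matrix (Fin r) (Fin r) ℝ)
    (hQ : ∀ k, (Q k)ᵀ * Q k = 1)
    (hQpack : ∀ k k', k ≠ k' → δ < frob (Q k - Q k')) :
    ∀ j k j' k', (j, k) ≠ (j', k') → δ < frob (U j * Q k - U j' * Q k') := by
  intro j k j' k' hne
  by_cases hj : j = j'
  · subst hj
    have hk : k ≠ k' := fun h => hne (by rw [h])
    have hmul : U j * Q k - U j * Q k' = U j * (Q k - Q k') := (Matrix.mul_sub _ _ _).symm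
    have hfs : frobSq (U j * (Q k - Q k')) = frobSq (Q k - Q k') := by
      rw [frobSq_eq_trace, transpose_mul, mid_cancel (U j) (hU j), ← frobSq_eq_trace]
    calc δ < frob (Q k - Q k') := hQpack k k' hk
      _ = frob (U j * Q k - U j * Q k') := by rw [hmul, frob_eq, frob_eq, hfs]
  · refine lt_of_lt_of_le (hUpack j j' hj) ?_
    have hle := key_ineq (U j) (U j') (Q k) (Q k') (hU j) (hU j') (hQ k) (hQ k')
    rw [frob_eq, frob_eq]
    have h2 : (1 / Real.sqrt 2) * Real.sqrt (frobSq (U j * (U j)ᵀ - U j' * (U j')ᵀ))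
        = Real.sqrt (frobSq (U j * (U j)ᵀ - U j' * (U j')ᵀ) / 2) := by
      rw [Real.sqrt_div (frobSq_nonneg _)]; ring
    rw [h2]
    exact Real.sqrt_le_sqrt hle
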